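/- Let B be an r × r skew-symmetric matrix with entries in R = 𝒪/𝔭^d, where 𝒪 is the ring of integers of a p-adic field with maximal ideal 𝔭, residue field of cardinality p^f. Suppose some entry of B has level ℓ (i.e. lies in 𝔭^ℓ/𝔭^d but not 𝔭^{ℓ+1}/𝔭^d, with level d meaning the entry is zero). Then the kernel of B acting on R^{⊕r} has cardinality at most p^{fd(r−2) + 2fℓ}. -/

import Mathlib

open IsLocalRing
theorem quot_card {O : Type*} [CommRing O] [IsDomain O] [IsDiscreteValuationRing O]
    {p f : ℕ} (hres : Nat.card (ResidueField O) = p ^ f) (k : ℕ) :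
    Nat.card (O ⧸ (maximalIdeal O) ^ k) = p ^ (f * k) := by
  haveI : (maximalIdeal O).IsPrime := (maximalIdeal.isMaximal O).isPrime
  have h := cardQuot_pow_of_prime (P := maximalIdeal O)
    (IsDiscreteValuationRing.not_a_field O) (i := k)
  rw [Submodule.cardQuot_apply, Submodule.cardQuot_apply] at h
  rw [h, show Nat.card (O ⧸ maximalIdeal O) = p^f from hres, ← pow_mul]

theorem ann_card_le {O : Type*} [CommRing O] [IsDomain O] [IsDiscreteValuationRing O]
    {p f d ℓ : ℕ} (hres : Nat.card (ResidueField O) = p ^ f) (hp0 : 0 < p)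
    (hld : ℓ ≤ d) (a : O) (ha : a ∈ (maximalIdeal O) ^ ℓ)
    (ha2 : a ∉ (maximalIdeal O) ^ (ℓ + 1)) :
    Nat.card {x : O ⧸ (maximalIdeal O) ^ d //
      (Ideal.Quotient.mk ((maximalIdeal O) ^ d)) a * x = 0} ≤ p ^ (f * ℓ) := by
  obtain ⟨π, hπ⟩ := IsDiscreteValuationRing.exists_irreducible O
  have hmax : maximalIdeal O = Ideal.span {π} :=
    (IsDiscreteValuationRing.irreducible_iff_uniformizer π).mp hπ
  have hmem : ∀ (n : ℕ) (x : O), x ∈ (maximalIdeal O) ^ n ↔ π ^ n ∣ x := by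
    intro n x
    rw [hmax, Ideal.span_singleton_pow, Ideal.mem_span_singleton]
  have hπ0 : π ≠ 0 := hπ.ne_zero
  obtain ⟨c, rfl⟩ : π ^ ℓ ∣ a := (hmem ℓ a).mp ha
  have hc : ¬ π ∣ c := by
    rintro ⟨e, rfl⟩
    exact ha2 ((hmem _ _).mpr ⟨e, by ring⟩)
  have hkey : ∀ x : O, π ^ ℓ * c * x ∈ (maximalIdeal O) ^ d ↔ π ^ (d - ℓ) ∣ x := by
    intro x
    rw [hmem]
    constructor
    · intro h
      have h2 : π ^ ℓ * π ^ (d - ℓ) ∣ π ^ ℓ * (c * x) := by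
        rw [← pow_add, Nat.add_sub_cancel' hld]
        rwa [mul_assoc] at h
      have h3 : π ^ (d - ℓ) ∣ c * x :=
        (mul_dvd_mul_iff_left (pow_ne_zero ℓ hπ0)).mp h2
      exact hπ.prime.pow_dvd_of_dvd_mul_left _ hc h3
    · rintro ⟨e, rfl⟩
      have hd2 : π ^ ℓ * π ^ (d - ℓ) = π ^ d := by
        rw [← pow_add, Nat.add_sub_cancel' hld]
      exact ⟨c * e, by rw [← hd2]; ring⟩
  have hfin : Finite (O ⧸ (maximalIdeal O) ^ ℓ) := by
    apply Nat.finite_of_card_ne_zero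
    rw [quot_card hres]
    exact (pow_pos hp0 _).ne'
  have hpre : ∀ x : {x : O ⧸ (maximalIdeal O) ^ d //
      (Ideal.Quotient.mk ((maximalIdeal O) ^ d)) (π ^ ℓ * c) * x = 0},
      ∃ y : O, Ideal.Quotient.mk ((maximalIdeal O) ^ d) (π ^ (d - ℓ) * y) = x.1 := by
    intro x
    obtain ⟨xt, hxt⟩ := Ideal.Quotient.mk_surjective x.1
    have h0 : π ^ ℓ * c * xt ∈ (maximalIdeal O) ^ d := by
      have hx2 := x.2
      rw [← hxt, ← map_mul] at hx2
      exact Ideal.Quotient.eq_zero_iff_mem.mp hx2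
    obtain ⟨y, hy⟩ := (hkey xt).mp h0
    exact ⟨y, by rw [← hy, hxt]⟩
  have hF : Function.Injective
      (fun x => Ideal.Quotient.mk ((maximalIdeal O) ^ ℓ) (hpre x).choose) := by
    intro x x' h
    have hx := (hpre x).choose_spec
    have hx' := (hpre x').choose_spec
    apply Subtype.ext
    rw [← hx, ← hx']
    have hyy : (hpre x).choose - (hpre x').choose ∈ (maximalIdeal O) ^ ℓ :=
      Ideal.Quotient.eq.mp h
    apply Ideal.Quotient.eq.mpr
    obtain ⟨e, he⟩ := (hmem _ _).mp hyy
    apply (hmem _ _).mpr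
    have hd2 : π ^ ℓ * π ^ (d - ℓ) = π ^ d := by
      rw [← pow_add, Nat.add_sub_cancel' hld]
    exact ⟨e, by rw [← hd2, ← mul_sub, he]; ring⟩
  calc Nat.card _ ≤ Nat.card (O ⧸ (maximalIdeal O) ^ ℓ) :=
        Nat.card_le_card_of_injective _ hF
    _ = p ^ (f * ℓ) := quot_card hres ℓ


/-- Let `O` be the ring of integers of a `p`-adic field (formalized as a
complete discrete valuation ring) with maximal ideal `𝔭` and residue field of
cardinality `p^f`, and let `R = O/𝔭^d`.  If `B` is an `r × r` skew-symmetric matrix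
over `R` having an entry of level `ℓ`, then `#ker B ≤ p^{fd(r−2) + 2fℓ}`. -/
theorem stmt_10 (p f d r ℓ : ℕ) (hp : p.Prime) (hf : 0 < f) (hd : 0 < d) (hℓ : ℓ ≤ d)
    {O : Type*} [CommRing O] [IsDomain O] [IsDiscreteValuationRing O]
    [IsAdicComplete (maximalIdeal O) O]
    (hres : Nat.card (ResidueField O) = p ^ f)
    (B : Matrix (Fin r) (Fin r) (O ⧸ (maximalIdeal O) ^ d))
    (hskew : B.transpose = -B) (hdiag : ∀ i, B i i = 0)
    (i j : Fin r)
    (hlev₁ : B i j ∈ Ideal.map (Ideal.Quotient.mk ((maximalIdeal O) ^ d))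
      ((maximalIdeal O) ^ ℓ))
    (hlev₂ : ℓ < d → B i j ∉ Ideal.map (Ideal.Quotient.mk ((maximalIdeal O) ^ d))
      ((maximalIdeal O) ^ (ℓ + 1))) :
    Nat.card {x : Fin r → O ⧸ (maximalIdeal O) ^ d // B.mulVec x = 0}
      ≤ p ^ (f * d * (r - 2) + 2 * f * ℓ) := by
  have hp0 : 0 < p := hp.pos
  have hRfin : Finite (O ⧸ (maximalIdeal O) ^ d) := by
    apply Nat.finite_of_card_ne_zero
    rw [quot_card hres]
    exact (pow_pos hp0 _).ne'
  by_cases hld : ℓ < d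
  · -- main case
    have hij : i ≠ j := by
      rintro rfl
      exact hlev₂ hld (by rw [hdiag i]; exact Submodule.zero_mem _)
    obtain ⟨a, ha, hab⟩ :=
      (Ideal.mem_map_iff_of_surjective _ Ideal.Quotient.mk_surjective).mp hlev₁
    have ha2 : a ∉ (maximalIdeal O) ^ (ℓ + 1) := fun h =>
      hlev₂ hld (hab ▸ Ideal.mem_map_of_mem _ h)
    have hji : B j i = -B i j := by
      have h := congrFun (congrFun hskew i) j
      simpa [Matrix.transpose_apply] using h
    set K := LinearMap.ker (Matrix.mulVecLin B) with hK
    have hEq : Nat.card {x : Fin r → (O ⧸ (maximalIdeal O) ^ d) // B.mulVec x = 0} = Nat.card K := by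
      apply Nat.card_congr
      exact Equiv.subtypeEquivRight (by intro x; simp [hK, LinearMap.mem_ker])
    let S := {k : Fin r // k ≠ i ∧ k ≠ j}
    let φ : K →+ (S → (O ⧸ (maximalIdeal O) ^ d)) := AddMonoidHom.mk' (fun x s => x.1 s.1) (fun x y => rfl)
    have hcount : Nat.card K = Nat.card (K ⧸ φ.ker) * Nat.card φ.ker :=
      AddSubgroup.card_eq_card_quotient_mul_card_addSubgroup φ.ker
    have hquot : Nat.card (K ⧸ φ.ker) = Nat.card φ.range :=
      Nat.card_congr (QuotientAddGroup.quotientKerEquivRange φ).toEquiv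
    have hScard : Nat.card S = r - 2 := by
      rw [Nat.card_eq_fintype_card, Fintype.card_subtype]
      have : (Finset.univ.filter fun k => k ≠ i ∧ k ≠ j) = Finset.univ \ {i, j} := by
        ext k; simp [and_comm]
      rw [this, Finset.card_sdiff_of_subset (Finset.subset_univ _), Finset.card_pair hij,
        Finset.card_univ, Fintype.card_fin]
    have hrange : Nat.card φ.range ≤ p ^ (f * d * (r - 2)) := by
      calc Nat.card φ.range ≤ Nat.card (S → (O ⧸ (maximalIdeal O) ^ d)) :=
            Nat.card_le_card_of_injective Subtype.val Subtype.val_injective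
        _ = p ^ (f * d * (r - 2)) := by
            rw [Nat.card_fun, quot_card hres, hScard, ← pow_mul]
    -- kernel bound
    have hann := ann_card_le (d := d) hres hp0 hℓ a ha ha2
    have hker : Nat.card φ.ker ≤ p ^ (f * ℓ) * p ^ (f * ℓ) := by
      have hrow : ∀ x : φ.ker, ∀ m : Fin r, ∑ k, B m k * x.1.1 k = 0 := by
        intro x m
        have hx : B.mulVec x.1.1 = 0 := x.1.2
        have := congrFun hx m
        simpa [Matrix.mulVec, dotProduct] using this
      have hzero : ∀ x : φ.ker, ∀ k : Fin r, k ≠ i → k ≠ j → x.1.1 k = 0 := by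
        intro x k hki hkj
        have hk : φ x.1 = 0 := x.2
        exact congrFun hk ⟨k, hki, hkj⟩
      have hxj : ∀ x : φ.ker, B i j * x.1.1 j = 0 := by
        intro x
        have := hrow x i
        rwa [Finset.sum_eq_single j
          (fun k _ hk => by
            by_cases hki : k = i
            · rw [hki, hdiag i, zero_mul]
            · rw [hzero x k hki hk, mul_zero])
          (fun h => absurd (Finset.mem_univ j) h)] at this
      have hxi : ∀ x : φ.ker, B i j * x.1.1 i = 0 := by
        intro x
        have := hrow x j
        rw [Finset.sum_eq_single i
          (fun k _ hk => by
            by_cases hkj : k = j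
            · rw [hkj, hdiag j, zero_mul]
            · rw [hzero x k hk hkj, mul_zero])
          (fun h => absurd (Finset.mem_univ i) h)] at this
        rw [hji] at this
        rw [← neg_eq_zero, ← neg_mul]
        exact this
      have hinj : Function.Injective (fun x : φ.ker =>
          ((⟨x.1.1 i, by rw [hab]; exact hxi x⟩, ⟨x.1.1 j, by rw [hab]; exact hxj x⟩) :
            {y : (O ⧸ (maximalIdeal O) ^ d) // (Ideal.Quotient.mk ((maximalIdeal O) ^ d)) a * y = 0} ×
            {y : (O ⧸ (maximalIdeal O) ^ d) // (Ideal.Quotient.mk ((maximalIdeal O) ^ d)) a * y = 0})) := by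
        intro x x' h
        simp only [Prod.mk.injEq, Subtype.mk.injEq] at h
        apply Subtype.ext
        apply Subtype.ext
        funext k
        by_cases hki : k = i
        · rw [hki]; exact h.1
        · by_cases hkj : k = j
          · rw [hkj]; exact h.2
          · rw [hzero x k hki hkj, hzero x' k hki hkj]
      calc Nat.card φ.ker ≤ Nat.card
            ({y : (O ⧸ (maximalIdeal O) ^ d) // (Ideal.Quotient.mk ((maximalIdeal O) ^ d)) a * y = 0} ×
             {y : (O ⧸ (maximalIdeal O) ^ d) // (Ideal.Quotient.mk ((maximalIdeal O) ^ d)) a * y = 0}) :=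
            Nat.card_le_card_of_injective _ hinj
        _ = _ * _ := Nat.card_prod _ _
        _ ≤ p ^ (f * ℓ) * p ^ (f * ℓ) := Nat.mul_le_mul hann hann
    rw [hEq, hcount, hquot]
    calc Nat.card φ.range * Nat.card φ.ker
        ≤ p ^ (f * d * (r - 2)) * (p ^ (f * ℓ) * p ^ (f * ℓ)) :=
          Nat.mul_le_mul hrange hker
      _ = p ^ (f * d * (r - 2) + 2 * f * ℓ) := by
          rw [← pow_add, ← pow_add]
          ring_nf
  · -- trivial case ℓ = d
    have hle : ℓ = d := le_antisymm hℓ (not_lt.mp hld)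
    subst hle
    calc Nat.card {x : Fin r → O ⧸ (maximalIdeal O) ^ ℓ // B.mulVec x = 0}
        ≤ Nat.card (Fin r → O ⧸ (maximalIdeal O) ^ ℓ) :=
          Nat.card_le_card_of_injective Subtype.val Subtype.val_injective
      _ = p ^ (f * ℓ * r) := by
          rw [Nat.card_fun, quot_card hres, Nat.card_eq_fintype_card, Fintype.card_fin,
            ← pow_mul]
      _ ≤ p ^ (f * ℓ * (r - 2) + 2 * f * ℓ) := by
          apply Nat.pow_le_pow_right hp0
          rcases le_total r 2 with h | h
          · have h1 : f * ℓ * r ≤ 2 * f * ℓ := by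
              calc f * ℓ * r ≤ f * ℓ * 2 := Nat.mul_le_mul_left _ h
                _ = 2 * f * ℓ := by ring
            exact h1.trans (Nat.le_add_left _ _)
          · apply le_of_eq
            calc f * ℓ * r = f * ℓ * (r - 2 + 2) := by rw [Nat.sub_add_cancel h]
              _ = f * ℓ * (r - 2) + 2 * f * ℓ := by ring
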